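/- Let K be an algebraically closed field of characteristic zero and let α, β ∈ K be nonzero. Consider F₁(X₀,X₁,X₂,X₃) = X₁² + X₂² + X₃² − αX₀² and F₂(X₀,X₁,X₂,X₃) = X₁⁴ + X₂⁴ + X₃⁴ − βX₀⁴, with Jacobian matrix J(x) = [[−2αx₀, 2x₁, 2x₂, 2x₃], [−4βx₀³, 4x₁³, 4x₂³, 4x₃³]]. Then J(x) has rank 2 for every nonzero x = (x₀,x₁,x₂,x₃) ∈ K⁴ satisfying F₁(x) = F₂(x) = 0 if and only if α² ∉ {β, 2β, 3β}. -/
import Mathlib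

open Matrix

/-- If some 2×2 minor of a 2×4 matrix is nonzero, the matrix has rank 2. -/
lemma aux_rank_two {K : Type*} [Field K] {M : Matrix (Fin 2) (Fin 4) K}
    (i j : Fin 4) (h : M 0 i * M 1 j - M 0 j * M 1 i ≠ 0) : M.rank = 2 := by
  classical
  set P : Matrix (Fin 4) (Fin 2) K :=
    Matrix.of fun k b => if k = (![i, j] : Fin 2 → Fin 4) b then (1 : K) else 0 with hP
  have hMP : M * P = !![M 0 i, M 0 j; M 1 i, M 1 j] := by
    ext a b
    have : (M * P) a b = M a ((![i, j] : Fin 2 → Fin 4) b) := by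
      simp [Matrix.mul_apply, hP, mul_ite, mul_one, mul_zero]
    rw [this]
    fin_cases a <;> fin_cases b <;> simp
  have hdet : (M * P).det ≠ 0 := by
    rw [hMP, Matrix.det_fin_two_of]
    exact h
  have hU : IsUnit (M * P) := (Matrix.isUnit_iff_isUnit_det _).mpr (isUnit_iff_ne_zero.mpr hdet)
  have h2 : (M * P).rank = 2 := by
    rw [Matrix.rank_of_isUnit _ hU, Fintype.card_fin]
  refine le_antisymm ?_ ?_
  · simpa using M.rank_le_card_height
  · calc (2:ℕ) = (M * P).rank := h2.symm
      _ ≤ M.rank := Matrix.rank_mul_le_left M P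

lemma aux_not_two {K : Type*} [Field K] {M : Matrix (Fin 2) (Fin 4) K}
    (w : Fin 2 → K) (v : Fin 4 → K) (h : M = vecMulVec w v) : M.rank ≠ 2 := by
  have h1 : M.rank ≤ 1 := by
    rw [h, Matrix.vecMulVec_eq (Fin 1)]
    exact (Matrix.rank_mul_le_right _ _).trans
      ((Matrix.rank_le_card_height _).trans (by simp))
  omega

lemma aux_zero {K : Type*} [Field K] [CharZero K] {b c d : K}
    (hF1 : b ^ 2 + c ^ 2 + d ^ 2 = 0)
    (m12 : b * c * (c ^ 2 - b ^ 2) = 0)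
    (m13 : b * d * (d ^ 2 - b ^ 2) = 0)
    (m23 : c * d * (d ^ 2 - c ^ 2) = 0) :
    b = 0 ∧ c = 0 ∧ d = 0 := by
  have sq : ∀ x : K, x ≠ 0 → x ^ 2 = 0 → False := fun x hx h =>
    hx (pow_eq_zero_iff (two_ne_zero) |>.mp h)
  rcases eq_or_ne b 0 with hb | hb <;> rcases eq_or_ne c 0 with hc | hc <;>
    rcases eq_or_ne d 0 with hd | hd
  · exact ⟨hb, hc, hd⟩
  · exact absurd (sq d hd (by linear_combination hF1 - b * hb - c * hc)) not_false
  · exact absurd (sq c hc (by linear_combination hF1 - b * hb - d * hd)) not_false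
  · -- c, d nonzero : c² = d², 2c² = 0
    have hcd : d ^ 2 = c ^ 2 := by
      rcases mul_eq_zero.mp m23 with h | h
      · rcases mul_eq_zero.mp h with h' | h'
        · exact absurd h' hc
        · exact absurd h' hd
      · linear_combination h
    have : (2 : K) * c ^ 2 = 0 := by linear_combination hF1 - hcd - b * hb
    exact absurd (sq c hc (by
      rcases mul_eq_zero.mp this with h | h
      · exact absurd h two_ne_zero
      · exact h)) not_false
  · exact absurd (sq b hb (by linear_combination hF1 - c * hc - d * hd)) not_false
  · -- b, d nonzero
    have hbd : d ^ 2 = b ^ 2 := by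
      rcases mul_eq_zero.mp m13 with h | h
      · rcases mul_eq_zero.mp h with h' | h'
        · exact absurd h' hb
        · exact absurd h' hd
      · linear_combination h
    have : (2 : K) * b ^ 2 = 0 := by linear_combination hF1 - hbd - c * hc
    exact absurd (sq b hb (by
      rcases mul_eq_zero.mp this with h | h
      · exact absurd h two_ne_zero
      · exact h)) not_false
  · -- b, c nonzero
    have hbc : c ^ 2 = b ^ 2 := by
      rcases mul_eq_zero.mp m12 with h | h
      · rcases mul_eq_zero.mp h with h' | h'
        · exact absurd h' hb
        · exact absurd h' hc
      · linear_combination h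
    have : (2 : K) * b ^ 2 = 0 := by linear_combination hF1 - hbc - d * hd
    exact absurd (sq b hb (by
      rcases mul_eq_zero.mp this with h | h
      · exact absurd h two_ne_zero
      · exact h)) not_false
  · -- all nonzero
    have hbc : c ^ 2 = b ^ 2 := by
      rcases mul_eq_zero.mp m12 with h | h
      · rcases mul_eq_zero.mp h with h' | h'
        · exact absurd h' hb
        · exact absurd h' hc
      · linear_combination h
    have hbd : d ^ 2 = b ^ 2 := by
      rcases mul_eq_zero.mp m13 with h | h
      · rcases mul_eq_zero.mp h with h' | h'
        · exact absurd h' hb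
        · exact absurd h' hd
      · linear_combination h
    have : (3 : K) * b ^ 2 = 0 := by linear_combination hF1 - hbc - hbd
    exact absurd (sq b hb (by
      rcases mul_eq_zero.mp this with h | h
      · exact absurd h three_ne_zero
      · exact h)) not_false

lemma aux_nonzero {K : Type*} [Field K] [CharZero K] {α β a b c d : K}
    (hα : α ≠ 0) (ha : a ≠ 0)
    (hF1 : b ^ 2 + c ^ 2 + d ^ 2 - α * a ^ 2 = 0)
    (g1 : b = 0 ∨ α * b ^ 2 = β * a ^ 2)
    (g2 : c = 0 ∨ α * c ^ 2 = β * a ^ 2)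
    (g3 : d = 0 ∨ α * d ^ 2 = β * a ^ 2) :
    α ^ 2 = β ∨ α ^ 2 = 2 * β ∨ α ^ 2 = 3 * β := by
  obtain ⟨k1, hk1, e1⟩ : ∃ k : K, (k = 0 ∨ k = 1) ∧ α * b ^ 2 = k * (β * a ^ 2) := by
    rcases g1 with h | h
    · exact ⟨0, Or.inl rfl, by rw [h]; ring⟩
    · exact ⟨1, Or.inr rfl, by linear_combination h⟩
  obtain ⟨k2, hk2, e2⟩ : ∃ k : K, (k = 0 ∨ k = 1) ∧ α * c ^ 2 = k * (β * a ^ 2) := by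
    rcases g2 with h | h
    · exact ⟨0, Or.inl rfl, by rw [h]; ring⟩
    · exact ⟨1, Or.inr rfl, by linear_combination h⟩
  obtain ⟨k3, hk3, e3⟩ : ∃ k : K, (k = 0 ∨ k = 1) ∧ α * d ^ 2 = k * (β * a ^ 2) := by
    rcases g3 with h | h
    · exact ⟨0, Or.inl rfl, by rw [h]; ring⟩
    · exact ⟨1, Or.inr rfl, by linear_combination h⟩
  have key : (α ^ 2 - (k1 + k2 + k3) * β) * a ^ 2 = 0 := by
    linear_combination (-α) * hF1 + e1 + e2 + e3
  have key2 : α ^ 2 = (k1 + k2 + k3) * β := by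
    rcases mul_eq_zero.mp key with h | h
    · linear_combination h
    · exact absurd (pow_eq_zero_iff two_ne_zero |>.mp h) ha
  rcases hk1 with rfl | rfl <;> rcases hk2 with rfl | rfl <;> rcases hk3 with rfl | rfl <;>
    norm_num at key2 <;> tauto

/-- Lemma 4.1: the system `{F₁, F₂}` with `F₁ = X₁² + X₂² + X₃² − αX₀²` and
`F₂ = X₁⁴ + X₂⁴ + X₃⁴ − βX₀⁴` is nonsingular (its Jacobian has rank 2 at every
nonzero common zero) iff `α² ∉ {β, 2β, 3β}`. -/
theorem stmt_11 {K : Type*} [Field K] [IsAlgClosed K] [CharZero K]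
    (α β : K) (hα : α ≠ 0) (hβ : β ≠ 0) :
    (∀ x : Fin 4 → K, x ≠ 0 →
      x 1 ^ 2 + x 2 ^ 2 + x 3 ^ 2 - α * x 0 ^ 2 = 0 →
      x 1 ^ 4 + x 2 ^ 4 + x 3 ^ 4 - β * x 0 ^ 4 = 0 →
      (!![-2 * α * x 0, 2 * x 1, 2 * x 2, 2 * x 3;
          -4 * β * x 0 ^ 3, 4 * x 1 ^ 3, 4 * x 2 ^ 3, 4 * x 3 ^ 3] :
        Matrix (Fin 2) (Fin 4) K).rank = 2) ↔
    (α ^ 2 ≠ β ∧ α ^ 2 ≠ 2 * β ∧ α ^ 2 ≠ 3 * β) := by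
  constructor
  · intro H
    refine ⟨?_, ?_, ?_⟩
    · -- α² = β gives a singular point ![1, s, 0, 0] with s² = α
      intro heq
      obtain ⟨s, hs⟩ := IsAlgClosed.exists_pow_nat_eq α (n := 2) two_pos
      have hx : (![1, s, 0, 0] : Fin 4 → K) ≠ 0 := fun h => one_ne_zero (congrFun h 0)
      have h1 : (![1, s, 0, 0] : Fin 4 → K) 1 ^ 2 + (![1, s, 0, 0] : Fin 4 → K) 2 ^ 2 +
          (![1, s, 0, 0] : Fin 4 → K) 3 ^ 2 - α * (![1, s, 0, 0] : Fin 4 → K) 0 ^ 2 = 0 := by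
        show s ^ 2 + 0 ^ 2 + 0 ^ 2 - α * 1 ^ 2 = 0
        linear_combination hs
      have h2 : (![1, s, 0, 0] : Fin 4 → K) 1 ^ 4 + (![1, s, 0, 0] : Fin 4 → K) 2 ^ 4 +
          (![1, s, 0, 0] : Fin 4 → K) 3 ^ 4 - β * (![1, s, 0, 0] : Fin 4 → K) 0 ^ 4 = 0 := by
        show s ^ 4 + 0 ^ 4 + 0 ^ 4 - β * 1 ^ 4 = 0
        linear_combination (s ^ 2 + α) * hs + heq
      have hr := H ![1, s, 0, 0] hx h1 h2
      refine aux_not_two ![1, 2 * s ^ 2] ![-2 * α, 2 * s, 0, 0] ?_ hr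
      ext a b
      fin_cases a <;> fin_cases b <;>
        simp [Matrix.vecMulVec_apply] <;>
        first
          | ring1
          | linear_combination 4 * α * hs + 4 * heq
          | linear_combination -4 * α * hs - 4 * heq
          | linear_combination (4 * s) * hs
    · -- α² = 2β gives a singular point ![1, s, s, 0] with s² = α/2
      intro heq
      obtain ⟨s, hs⟩ := IsAlgClosed.exists_pow_nat_eq (α / 2) (n := 2) two_pos
      have hx : (![1, s, s, 0] : Fin 4 → K) ≠ 0 := fun h => one_ne_zero (congrFun h 0)
      have h1 : (![1, s, s, 0] : Fin 4 → K) 1 ^ 2 + (![1, s, s, 0] : Fin 4 → K) 2 ^ 2 +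
          (![1, s, s, 0] : Fin 4 → K) 3 ^ 2 - α * (![1, s, s, 0] : Fin 4 → K) 0 ^ 2 = 0 := by
        show s ^ 2 + s ^ 2 + 0 ^ 2 - α * 1 ^ 2 = 0
        linear_combination 2 * hs
      have h2 : (![1, s, s, 0] : Fin 4 → K) 1 ^ 4 + (![1, s, s, 0] : Fin 4 → K) 2 ^ 4 +
          (![1, s, s, 0] : Fin 4 → K) 3 ^ 4 - β * (![1, s, s, 0] : Fin 4 → K) 0 ^ 4 = 0 := by
        show s ^ 4 + s ^ 4 + 0 ^ 4 - β * 1 ^ 4 = 0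
        linear_combination (2 * s ^ 2 + α) * hs + (1 / 2) * heq
      have hr := H ![1, s, s, 0] hx h1 h2
      refine aux_not_two ![1, 2 * s ^ 2] ![-2 * α, 2 * s, 2 * s, 0] ?_ hr
      ext a b
      fin_cases a <;> fin_cases b <;>
        simp [Matrix.vecMulVec_apply] <;>
        first
          | ring1
          | linear_combination 4 * α * hs + 2 * heq
          | linear_combination -4 * α * hs - 2 * heq
          | linear_combination (4 * s) * hs
    · -- α² = 3β gives a singular point ![1, s, s, s] with s² = α/3
      intro heq
      obtain ⟨s, hs⟩ := IsAlgClosed.exists_pow_nat_eq (α / 3) (n := 2) two_pos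
      have hx : (![1, s, s, s] : Fin 4 → K) ≠ 0 := fun h => one_ne_zero (congrFun h 0)
      have h1 : (![1, s, s, s] : Fin 4 → K) 1 ^ 2 + (![1, s, s, s] : Fin 4 → K) 2 ^ 2 +
          (![1, s, s, s] : Fin 4 → K) 3 ^ 2 - α * (![1, s, s, s] : Fin 4 → K) 0 ^ 2 = 0 := by
        show s ^ 2 + s ^ 2 + s ^ 2 - α * 1 ^ 2 = 0
        linear_combination 3 * hs
      have h2 : (![1, s, s, s] : Fin 4 → K) 1 ^ 4 + (![1, s, s, s] : Fin 4 → K) 2 ^ 4 +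
          (![1, s, s, s] : Fin 4 → K) 3 ^ 4 - β * (![1, s, s, s] : Fin 4 → K) 0 ^ 4 = 0 := by
        show s ^ 4 + s ^ 4 + s ^ 4 - β * 1 ^ 4 = 0
        linear_combination (3 * s ^ 2 + α) * hs + (1 / 3) * heq
      have hr := H ![1, s, s, s] hx h1 h2
      refine aux_not_two ![1, 2 * s ^ 2] ![-2 * α, 2 * s, 2 * s, 2 * s] ?_ hr
      ext a b
      fin_cases a <;> fin_cases b <;>
        simp [Matrix.vecMulVec_apply] <;>
        first
          | ring1
          | linear_combination 4 * α * hs + (4 / 3) * heq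
          | linear_combination -4 * α * hs - (4 / 3) * heq
          | linear_combination (4 * s) * hs
  · rintro ⟨hk1, hk2, hk3⟩ x hx hF1 hF2
    by_contra hr
    have minor : ∀ i j : Fin 4,
        (!![-2 * α * x 0, 2 * x 1, 2 * x 2, 2 * x 3;
            -4 * β * x 0 ^ 3, 4 * x 1 ^ 3, 4 * x 2 ^ 3, 4 * x 3 ^ 3] :
          Matrix (Fin 2) (Fin 4) K) 0 i *
          (!![-2 * α * x 0, 2 * x 1, 2 * x 2, 2 * x 3;
            -4 * β * x 0 ^ 3, 4 * x 1 ^ 3, 4 * x 2 ^ 3, 4 * x 3 ^ 3] :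
          Matrix (Fin 2) (Fin 4) K) 1 j -
          (!![-2 * α * x 0, 2 * x 1, 2 * x 2, 2 * x 3;
            -4 * β * x 0 ^ 3, 4 * x 1 ^ 3, 4 * x 2 ^ 3, 4 * x 3 ^ 3] :
          Matrix (Fin 2) (Fin 4) K) 0 j *
          (!![-2 * α * x 0, 2 * x 1, 2 * x 2, 2 * x 3;
            -4 * β * x 0 ^ 3, 4 * x 1 ^ 3, 4 * x 2 ^ 3, 4 * x 3 ^ 3] :
          Matrix (Fin 2) (Fin 4) K) 1 i = 0 := by
      intro i j
      by_contra hm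
      exact hr (aux_rank_two i j hm)
    have m01 : (-2 * α * x 0) * (4 * x 1 ^ 3) - (2 * x 1) * (-4 * β * x 0 ^ 3) = 0 := minor 0 1
    have m02 : (-2 * α * x 0) * (4 * x 2 ^ 3) - (2 * x 2) * (-4 * β * x 0 ^ 3) = 0 := minor 0 2
    have m03 : (-2 * α * x 0) * (4 * x 3 ^ 3) - (2 * x 3) * (-4 * β * x 0 ^ 3) = 0 := minor 0 3
    have m12 : (2 * x 1) * (4 * x 2 ^ 3) - (2 * x 2) * (4 * x 1 ^ 3) = 0 := minor 1 2
    have m13 : (2 * x 1) * (4 * x 3 ^ 3) - (2 * x 3) * (4 * x 1 ^ 3) = 0 := minor 1 3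
    have m23 : (2 * x 2) * (4 * x 3 ^ 3) - (2 * x 3) * (4 * x 2 ^ 3) = 0 := minor 2 3
    rcases eq_or_ne (x 0) 0 with ha | ha
    · -- x₀ = 0 : no singular point at all
      obtain ⟨hb, hc, hd⟩ := aux_zero (b := x 1) (c := x 2) (d := x 3)
        (by linear_combination hF1 + α * x 0 * ha)
        (by linear_combination (1 / 8) * m12)
        (by linear_combination (1 / 8) * m13)
        (by linear_combination (1 / 8) * m23)
      apply hx
      funext i
      fin_cases i
      · exact ha
      · exact hb
      · exact hc
      · exact hd
    · -- x₀ ≠ 0 : deduce α² ∈ {β, 2β, 3β}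
      have g : ∀ y : K, (8 * x 0 * y) * (β * x 0 ^ 2 - α * y ^ 2) = 0 →
          y = 0 ∨ α * y ^ 2 = β * x 0 ^ 2 := by
        intro y t
        rcases mul_eq_zero.mp t with h | h
        · rcases mul_eq_zero.mp h with h' | h'
          · exact absurd h' (mul_ne_zero (by norm_num) ha)
          · exact Or.inl h'
        · exact Or.inr (by linear_combination -h)
      have g1 := g (x 1) (by linear_combination m01)
      have g2 := g (x 2) (by linear_combination m02)
      have g3 := g (x 3) (by linear_combination m03)
      rcases aux_nonzero hα ha hF1 g1 g2 g3 with h | h | h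
      · exact hk1 h
      · exact hk2 h
      · exact hk3 h
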